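/- Let g_α(x) = x² − l_α(x), where l_α is the pseudo Huber loss. Then for all x with α²x² < 1, the second derivative satisfies |2 − l_α''(x)| ≤ 3α²x². -/

import Mathlib

/-- The second derivative of the pseudo Huber loss. -/
noncomputable def pseudoHuber'' (α x : ℝ) : ℝ := 2 * (α ^ 3)⁻¹ / ((α ^ 2)⁻¹ + x ^ 2) ^ ((3 : ℝ) / 2)

theorem stmt_6 (α : ℝ) (hα : 0 < α) (x : ℝ) (hx : α ^ 2 * x ^ 2 < 1) :
    |2 - pseudoHuber'' α x| ≤ 3 * α ^ 2 * x ^ 2 := by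
  set t : ℝ := α ^ 2 * x ^ 2 with ht_def
  have ht : 0 ≤ t := by positivity
  have hα2 : (0:ℝ) < (α ^ 2)⁻¹ := by positivity
  have hbase : (α ^ 2)⁻¹ + x ^ 2 = (α ^ 2)⁻¹ * (1 + t) := by
    field_simp [ht_def]; ring
  have h1t : (0:ℝ) < 1 + t := by linarith
  have hsplit : ((α ^ 2)⁻¹ * (1 + t)) ^ ((3:ℝ)/2)
      = ((α ^ 2)⁻¹) ^ ((3:ℝ)/2) * (1 + t) ^ ((3:ℝ)/2) :=
    Real.mul_rpow hα2.le h1t.le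
  have hαpow : ((α ^ 2)⁻¹) ^ ((3:ℝ)/2) = (α ^ 3)⁻¹ := by
    rw [← Real.rpow_neg_one (α ^ 2), ← Real.rpow_natCast α 2, ← Real.rpow_mul hα.le,
      ← Real.rpow_mul hα.le]
    norm_num
  set u : ℝ := Real.sqrt (1 + t) with hu_def
  have hu1 : 1 ≤ u := by
    rw [hu_def]
    exact Real.one_le_sqrt.mpr (by linarith)
  have hu2 : u ^ 2 = 1 + t := Real.sq_sqrt h1t.le
  have hupow : (1 + t) ^ ((3:ℝ)/2) = u ^ 3 := by
    rw [hu_def, Real.sqrt_eq_rpow, ← Real.rpow_natCast ((1+t) ^ ((1:ℝ)/2)) 3,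
      ← Real.rpow_mul h1t.le]
    norm_num
  have hu3 : (0:ℝ) < u ^ 3 := by positivity
  have hPH : pseudoHuber'' α x = 2 / u ^ 3 := by
    rw [pseudoHuber'', hbase, hsplit, hαpow, hupow]
    rw [mul_comm (2:ℝ) ((α ^ 3)⁻¹),
      mul_div_mul_left _ _ (by positivity : (α ^ 3)⁻¹ ≠ 0)]
  rw [hPH]
  have hle2 : 2 / u ^ 3 ≤ 2 := by
    rw [div_le_iff₀ hu3]
    nlinarith
  rw [abs_of_nonneg (by linarith)]
  have hgoal : 2 - 2 / u ^ 3 ≤ 3 * (u ^ 2 - 1) := by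
    set v : ℝ := 2 / u ^ 3 with hv_def
    have hv : v * u ^ 3 = 2 := by
      rw [hv_def]; field_simp
    nlinarith [mul_nonneg (sq_nonneg (u - 1))
      (by positivity : (0:ℝ) ≤ 3*u^3 + 6*u^2 + 4*u + 2), hu3, hv]
  calc 2 - 2 / u ^ 3 ≤ 3 * (u ^ 2 - 1) := hgoal
    _ = 3 * t := by rw [hu2]; ring
    _ = 3 * α ^ 2 * x ^ 2 := by rw [ht_def]; ring
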